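/- For the two-qubit state σ' = (1/2)|φ⟩⟨φ| + (1/4)(|01⟩⟨01| + |10⟩⟨10|) with |φ⟩ = (|00⟩+|11⟩)/√2, the measure satisfies M(σ') = M^A(σ') = M^B(σ') = 1/2, which is nonzero; in particular σ' is detected as nonclassically correlated by M. -/

import Mathlib

open Matrix Kronecker Finset
open scoped ComplexOrder

attribute [local instance] Classical.propDecidable

noncomputable section

/-- nearest integer multiple of `y` to `x`, ties broken downward; `0` if `y = 0`. -/
def nim (y x : ℝ) : ℝ :=
  if y = 0 then 0
  else if x - y * ⌊x / y⌋ ≤ y * ⌈x / y⌉ - x then y * ⌊x / y⌋ else y * ⌈x / y⌉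

/-- partial trace over the second (B) factor -/
def ptraceB {α β : Type*} [Fintype α] [Fintype β]
    (ρ : Matrix (α × β) (α × β) ℂ) : Matrix α α ℂ :=
  fun a a' => ∑ b : β, ρ (a, b) (a', b)

/-- partial trace over the first (A) factor -/
def ptraceA {α β : Type*} [Fintype α] [Fintype β]
    (ρ : Matrix (α × β) (α × β) ℂ) : Matrix β β ℂ :=
  fun b b' => ∑ a : α, ρ (a, b) (a, b')

/-- the (real) eigenvalues of a Hermitian matrix, junk value `0` otherwise -/
def evalsR {n : Type*} [Fintype n] [DecidableEq n] (A : Matrix n n ℂ) : n → ℝ :=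
  if h : A.IsHermitian then h.eigenvalues else 0

/-- orthogonal projection onto the η-eigenspace of a Hermitian matrix -/
def eigProj {n : Type*} [Fintype n] [DecidableEq n] (ρ : Matrix n n ℂ) (η : ℝ) :
    Matrix n n ℂ :=
  if h : ρ.IsHermitian then
    ∑ k ∈ univ.filter (fun k => h.eigenvalues k = η),
      vecMulVec (fun i => h.eigenvectorBasis k i) (star fun i => h.eigenvectorBasis k i)
  else 0

/-- truncation of ρ down to the η-eigenspace: `η • P_η` -/
def trunc {n : Type*} [Fintype n] [DecidableEq n] (ρ : Matrix n n ℂ) (η : ℝ) :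
    Matrix n n ℂ := (η : ℂ) • eigProj ρ η

/-- dimension of the η-eigenspace -/
def dimEig {n : Type*} [Fintype n] [DecidableEq n] (ρ : Matrix n n ℂ) (η : ℝ) : ℕ :=
  if h : ρ.IsHermitian then (univ.filter (fun k => h.eigenvalues k = η)).card else 0

/-- a single term of the measure `M` -/
def Mterm (η T lam : ℝ) : ℝ := -(|lam - nim η lam| * Real.logb 2 (lam / T))

/-- the measure `M` seen from side A -/
def MmeasA {α β : Type*} [Fintype α] [Fintype β] [DecidableEq α] [DecidableEq β]
    (ρ : Matrix (α × β) (α × β) ℂ) : ℝ :=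
  ∑ η ∈ Finset.image (evalsR ρ) univ, ∑ i : α,
    Mterm η (η * (dimEig ρ η : ℝ)) (evalsR (ptraceB (trunc ρ η)) i)

/-- the measure `M` seen from side B -/
def MmeasB {α β : Type*} [Fintype α] [Fintype β] [DecidableEq α] [DecidableEq β]
    (ρ : Matrix (α × β) (α × β) ℂ) : ℝ :=
  ∑ η ∈ Finset.image (evalsR ρ) univ, ∑ i : β,
    Mterm η (η * (dimEig ρ η : ℝ)) (evalsR (ptraceA (trunc ρ η)) i)

/-- the measure `M` of nonclassical correlation -/
def Mmeas {α β : Type*} [Fintype α] [Fintype β] [DecidableEq α] [DecidableEq β]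
    (ρ : Matrix (α × β) (α × β) ℂ) : ℝ := (MmeasA ρ + MmeasB ρ) / 2

def IsDensityMatrix {n : Type*} [Fintype n] [DecidableEq n] (ρ : Matrix n n ℂ) : Prop :=
  ρ.PosSemidef ∧ ρ.trace = 1

/-- ρ admits an eigenbasis consisting of product vectors -/
def HasProductEigenbasis {α β : Type*} [Fintype α] [Fintype β] [DecidableEq α] [DecidableEq β]
    (ρ : Matrix (α × β) (α × β) ℂ) : Prop :=
  ∃ (a : α → α → ℂ) (b : β → β → ℂ) (e : α → β → ℝ),
    (∀ j j', ∑ i, star (a j i) * a j' i = if j = j' then 1 else 0) ∧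
    (∀ k k', ∑ i, star (b k i) * b k' i = if k = k' then 1 else 0) ∧
    ρ = ∑ j : α, ∑ k : β,
      (e j k : ℂ) • (vecMulVec (a j) (star (a j)) ⊗ₖ vecMulVec (b k) (star (b k)))



section SpectralHelpers
variable {n : Type*} [Fintype n] [DecidableEq n] {A : Matrix n n ℂ} (hA : A.IsHermitian)

lemma sum_rankOne (f : ℝ → ℂ) :
    ∑ k, f (hA.eigenvalues k) • vecMulVec (fun i => hA.eigenvectorBasis k i)
      (star fun i => hA.eigenvectorBasis k i)
    = (hA.eigenvectorUnitary : Matrix n n ℂ) * diagonal (fun k => f (hA.eigenvalues k))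
      * star (hA.eigenvectorUnitary : Matrix n n ℂ) := by
  ext i j
  rw [Matrix.mul_apply]
  rw [Matrix.sum_apply]
  refine Finset.sum_congr rfl fun k _ => ?_
  simp only [Matrix.mul_diagonal, vecMulVec_apply, Matrix.smul_apply, Pi.star_apply,
    Matrix.star_apply, IsHermitian.eigenvectorUnitary_apply, smul_eq_mul]
  ring

lemma spectral_sum :
    A = ∑ k, ((hA.eigenvalues k : ℝ) : ℂ) • vecMulVec (fun i => hA.eigenvectorBasis k i)
      (star fun i => hA.eigenvectorBasis k i) := by
  rw [sum_rankOne hA (fun x => (x : ℂ))]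
  exact hA.spectral_theorem

lemma sq_Uform :
    A * A = (hA.eigenvectorUnitary : Matrix n n ℂ)
      * diagonal (fun k => (((hA.eigenvalues k)^2 : ℝ) : ℂ))
      * star (hA.eigenvectorUnitary : Matrix n n ℂ) := by
  conv_lhs => rw [hA.spectral_theorem, Unitary.conjStarAlgAut_apply]
  set U : Matrix n n ℂ := (hA.eigenvectorUnitary : Matrix n n ℂ) with hU
  set D : Matrix n n ℂ := diagonal (RCLike.ofReal ∘ hA.eigenvalues) with hD
  have h1 : star U * U = 1 := Unitary.coe_star_mul_self _
  simp only [Matrix.mul_assoc]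
  rw [← Matrix.mul_assoc (star U) U, h1, Matrix.one_mul,
    ← Matrix.mul_assoc D D, hD, diagonal_mul_diagonal,
    show (fun i => (RCLike.ofReal ∘ hA.eigenvalues : n → ℂ) i * (RCLike.ofReal ∘ hA.eigenvalues) i)
      = fun k => ((hA.eigenvalues k ^ 2 : ℝ) : ℂ) from by
        funext k
        simp only [Function.comp_apply, RCLike.ofReal, Algebra.cast, Complex.coe_algebraMap]
        rw [pow_two, Complex.ofReal_mul]]

lemma sq_sum :
    A * A = ∑ k, (((hA.eigenvalues k)^2 : ℝ) : ℂ) • vecMulVec (fun i => hA.eigenvectorBasis k i)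
      (star fun i => hA.eigenvectorBasis k i) := by
  rw [sum_rankOne hA (fun x => ((x^2 : ℝ) : ℂ))]
  exact sq_Uform hA

lemma eigProj_eq_sum (η : ℝ) :
    eigProj A η = ∑ k, (if hA.eigenvalues k = η then (1:ℂ) else 0) •
      vecMulVec (fun i => hA.eigenvectorBasis k i) (star fun i => hA.eigenvectorBasis k i) := by
  rw [eigProj, dif_pos hA, Finset.sum_filter]
  refine Finset.sum_congr rfl fun k _ => ?_
  split_ifs <;> simp

lemma eigProj_poly (η : ℝ) (a b : ℂ)
    (hpoly : ∀ k, (if hA.eigenvalues k = η then (1:ℂ) else 0)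
      = a * ((hA.eigenvalues k : ℝ) : ℂ)^2 + b * ((hA.eigenvalues k : ℝ) : ℂ)) :
    eigProj A η = a • (A * A) + b • A := by
  rw [eigProj_eq_sum hA η]
  have h2 : ∑ k, (if hA.eigenvalues k = η then (1:ℂ) else 0) •
      vecMulVec (fun i => hA.eigenvectorBasis k i) (star fun i => hA.eigenvectorBasis k i)
      = ∑ k, (a * ((hA.eigenvalues k : ℝ) : ℂ)^2 + b * ((hA.eigenvalues k : ℝ) : ℂ)) •
      vecMulVec (fun i => hA.eigenvectorBasis k i) (star fun i => hA.eigenvectorBasis k i) :=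
    Finset.sum_congr rfl fun k _ => by rw [hpoly k]
  rw [h2]
  have h3 : ∀ k : n, (a * ((hA.eigenvalues k : ℝ) : ℂ)^2 + b * ((hA.eigenvalues k : ℝ) : ℂ)) •
      vecMulVec (fun i => hA.eigenvectorBasis k i) (star fun i => hA.eigenvectorBasis k i)
      = a • ((((hA.eigenvalues k)^2 : ℝ) : ℂ) •
          vecMulVec (fun i => hA.eigenvectorBasis k i) (star fun i => hA.eigenvectorBasis k i))
        + b • (((hA.eigenvalues k : ℝ) : ℂ) •
          vecMulVec (fun i => hA.eigenvectorBasis k i) (star fun i => hA.eigenvectorBasis k i)) := by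
    intro k
    rw [smul_smul, smul_smul, ← add_smul]
    congr 1
    push_cast
    ring
  rw [Finset.sum_congr rfl fun k _ => h3 k, Finset.sum_add_distrib,
    ← Finset.smul_sum, ← Finset.smul_sum, ← sq_sum hA, ← spectral_sum hA]

lemma trace_eq_sum_evals : A.trace = ∑ k, ((hA.eigenvalues k : ℝ) : ℂ) := by
  conv_lhs => rw [hA.spectral_theorem, Unitary.conjStarAlgAut_apply]
  rw [Matrix.trace_mul_cycle, Unitary.coe_star_mul_self, Matrix.one_mul, Matrix.trace_diagonal]
  rfl

lemma trace_sq_eq_sum_evals : (A * A).trace = ∑ k, (((hA.eigenvalues k)^2 : ℝ) : ℂ) := by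
  rw [sq_Uform hA, Matrix.trace_mul_cycle, Unitary.coe_star_mul_self, Matrix.one_mul,
    Matrix.trace_diagonal]

lemma evecs_exists_nonzero (k : n) : ∃ i, (hA.eigenvectorBasis k i : ℂ) ≠ 0 := by
  by_contra h
  push_neg at h
  exact hA.eigenvectorBasis.orthonormal.ne_zero k (by ext i; exact h i)

lemma eval_of_smul_one {c : ℝ} (hAc : A = ((c : ℝ) : ℂ) • 1) (k : n) : hA.eigenvalues k = c := by
  have main : ∀ (e : ℝ) (v : n → ℂ), A *ᵥ v = e • v → (∃ i, v i ≠ 0) → e = c := by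
    rintro e v hv ⟨i, hi⟩
    rw [hAc, Matrix.smul_mulVec, Matrix.one_mulVec] at hv
    have h2 := congrFun hv i
    simp only [Pi.smul_apply, smul_eq_mul, Complex.real_smul] at h2
    have h3 : (c : ℂ) = (e : ℂ) := mul_right_cancel₀ hi h2
    exact_mod_cast h3.symm
  exact main _ _ (hA.mulVec_eigenvectorBasis k) (evecs_exists_nonzero hA k)

end SpectralHelpers

def ket00 : Fin 2 × Fin 2 → ℂ := fun p => if p = (0, 0) then 1 else 0
def ket01 : Fin 2 × Fin 2 → ℂ := fun p => if p = (0, 1) then 1 else 0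
def ket10 : Fin 2 × Fin 2 → ℂ := fun p => if p = (1, 0) then 1 else 0
/-- `|1+⟩ = |1⟩ ⊗ (|0⟩ + |1⟩)/√2` -/
def ket1p : Fin 2 × Fin 2 → ℂ := fun p => if p.1 = 1 then ((1 / Real.sqrt 2 : ℝ) : ℂ) else 0
/-- `|φ⟩ = (|00⟩ + |11⟩)/√2` -/
def ketBell : Fin 2 × Fin 2 → ℂ := fun p => if p.1 = p.2 then ((1 / Real.sqrt 2 : ℝ) : ℂ) else 0

/-- `σ' = (1/2)|φ⟩⟨φ| + (1/4)(|01⟩⟨01| + |10⟩⟨10|)` with `|φ⟩ = (|00⟩+|11⟩)/√2` -/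
def sigmaP : Matrix (Fin 2 × Fin 2) (Fin 2 × Fin 2) ℂ :=
  ((1 / 2 : ℝ) : ℂ) • vecMulVec ketBell (star ketBell)
  + ((1 / 4 : ℝ) : ℂ) • (vecMulVec ket01 (star ket01) + vecMulVec ket10 (star ket10))


/-- `4 • σ'` as an explicit 0/1 matrix -/
def Bm : Matrix (Fin 2 × Fin 2) (Fin 2 × Fin 2) ℂ :=
  fun p q => if (p.1 = p.2 ∧ q.1 = q.2) ∨ p = q then 1 else 0

/-- `16 • σ'^2` as an explicit matrix -/
def Bm2 : Matrix (Fin 2 × Fin 2) (Fin 2 × Fin 2) ℂ :=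
  fun p q => (if p.1 = p.2 ∧ q.1 = q.2 then 2 else 0) + (if p = q ∧ ¬ p.1 = p.2 then 1 else 0)

lemma sqrt_half_sq : ((1 / Real.sqrt 2 : ℝ) : ℂ) * ((1 / Real.sqrt 2 : ℝ) : ℂ) = (2 : ℂ)⁻¹ := by
  rw [← Complex.ofReal_mul, div_mul_div_comm, one_mul, Real.mul_self_sqrt (by norm_num)]
  norm_num

lemma sigmaP_eq : sigmaP = ((1/4 : ℝ) : ℂ) • Bm := by
  ext ⟨i, j⟩ ⟨k, l⟩
  fin_cases i <;> fin_cases j <;> fin_cases k <;> fin_cases l <;>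
    simp [sigmaP, Bm, vecMulVec_apply, ketBell, ket01, ket10, Pi.star_apply,
      Complex.star_def, Complex.conj_ofReal, Prod.ext_iff, sqrt_half_sq] <;>
    norm_num [← mul_inv, ← Complex.ofReal_mul, Real.mul_self_sqrt]

lemma Bm_mul_Bm : Bm * Bm = Bm2 := by
  ext ⟨i, j⟩ ⟨k, l⟩
  rw [Matrix.mul_apply]
  rw [Fintype.sum_prod_type]
  fin_cases i <;> fin_cases j <;> fin_cases k <;> fin_cases l <;>
    simp [Bm, Bm2, Fin.sum_univ_two, Prod.ext_iff] <;> norm_num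

lemma Bm_mul_Bm2 : Bm * Bm2 = (3 : ℂ) • Bm2 - (2 : ℂ) • Bm := by
  ext ⟨i, j⟩ ⟨k, l⟩
  rw [Matrix.sub_apply, Matrix.smul_apply, Matrix.smul_apply, Matrix.mul_apply]
  rw [Fintype.sum_prod_type]
  fin_cases i <;> fin_cases j <;> fin_cases k <;> fin_cases l <;>
    simp [Bm, Bm2, Fin.sum_univ_two, Prod.ext_iff] <;> norm_num

lemma Bm_herm : Bm.IsHermitian := by
  ext p q
  simp only [Matrix.conjTranspose_apply, Bm, apply_ite (star : ℂ → ℂ), star_one, star_zero]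
  have : ((q.1 = q.2 ∧ p.1 = p.2) ∨ q = p) ↔ ((p.1 = p.2 ∧ q.1 = q.2) ∨ p = q) := by
    constructor <;> rintro (⟨h1, h2⟩ | rfl) <;> simp [*]
  by_cases h : (q.1 = q.2 ∧ p.1 = p.2) ∨ q = p
  · rw [if_pos h, if_pos (this.mp h)]
  · rw [if_neg h, if_neg (fun hc => h (this.mpr hc))]

lemma sigmaP_herm : sigmaP.IsHermitian := by
  rw [sigmaP_eq]
  show (((1/4 : ℝ) : ℂ) • Bm).conjTranspose = _
  rw [Matrix.conjTranspose_smul, Complex.star_def, Complex.conj_ofReal, Bm_herm]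

lemma sigmaP_sq : sigmaP * sigmaP = ((1/16 : ℝ) : ℂ) • Bm2 := by
  rw [sigmaP_eq, Matrix.smul_mul, Matrix.mul_smul, smul_smul, Bm_mul_Bm]
  norm_num

lemma sigmaP_cubic : sigmaP * (sigmaP * sigmaP)
    = ((3/4 : ℝ) : ℂ) • (sigmaP * sigmaP) - ((1/8 : ℝ) : ℂ) • sigmaP := by
  rw [sigmaP_sq, sigmaP_eq, Matrix.smul_mul, Matrix.mul_smul, smul_smul, Bm_mul_Bm2]
  rw [smul_sub, smul_smul, smul_smul, smul_smul, smul_smul]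
  norm_num

lemma sigmaP_trace : sigmaP.trace = 1 := by
  rw [sigmaP_eq, Matrix.trace_smul, Matrix.trace]
  rw [Fintype.sum_prod_type]
  simp [Matrix.diag, Bm, Fin.sum_univ_two]
  norm_num

lemma sigmaP_sq_trace : (sigmaP * sigmaP).trace = ((3/8 : ℝ) : ℂ) := by
  rw [sigmaP_sq, Matrix.trace_smul, Matrix.trace]
  rw [Fintype.sum_prod_type]
  simp [Matrix.diag, Bm2, Fin.sum_univ_two]
  norm_num


lemma sigmaP_evals_mem (k : Fin 2 × Fin 2) :
    sigmaP_herm.eigenvalues k = 0 ∨ sigmaP_herm.eigenvalues k = 1/4 ∨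
      sigmaP_herm.eigenvalues k = 1/2 := by
  have h1 := sigmaP_herm.mulVec_eigenvectorBasis k
  obtain ⟨i, hi⟩ := evecs_exists_nonzero sigmaP_herm k
  have h3 : (sigmaP * (sigmaP * sigmaP)) *ᵥ ⇑(sigmaP_herm.eigenvectorBasis k)
      = (sigmaP_herm.eigenvalues k • (sigmaP_herm.eigenvalues k •
        (sigmaP_herm.eigenvalues k • ⇑(sigmaP_herm.eigenvectorBasis k)))) := by
    rw [← Matrix.mulVec_mulVec, ← Matrix.mulVec_mulVec, h1, Matrix.mulVec_smul, h1,
      Matrix.mulVec_smul, Matrix.mulVec_smul, h1]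
  have h4 : (sigmaP * (sigmaP * sigmaP)) *ᵥ ⇑(sigmaP_herm.eigenvectorBasis k)
      = ((3/4 : ℝ) : ℂ) • ((sigmaP_herm.eigenvalues k • (sigmaP_herm.eigenvalues k •
          ⇑(sigmaP_herm.eigenvectorBasis k))))
        - ((1/8 : ℝ) : ℂ) • (sigmaP_herm.eigenvalues k • ⇑(sigmaP_herm.eigenvectorBasis k)) := by
    rw [sigmaP_cubic, Matrix.sub_mulVec, Matrix.smul_mulVec, Matrix.smul_mulVec,
      ← Matrix.mulVec_mulVec, h1, Matrix.mulVec_smul, h1]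
  have h5 := congrFun (h3.symm.trans h4) i
  set e : ℝ := sigmaP_herm.eigenvalues k with he
  simp only [Pi.smul_apply, Pi.sub_apply, Complex.real_smul, smul_eq_mul] at h5
  have h6 : ((e^3 : ℝ) : ℂ) * (sigmaP_herm.eigenvectorBasis k i)
      = (((3/4) * e^2 - (1/8) * e : ℝ) : ℂ) * (sigmaP_herm.eigenvectorBasis k i) := by
    push_cast at h5 ⊢
    linear_combination h5
  have h7 : (e^3 : ℝ) = (3/4) * e^2 - (1/8) * e :=
    Complex.ofReal_inj.mp (mul_right_cancel₀ hi h6)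
  have h8 : e * (e - 1/4) * (e - 1/2) = 0 := by nlinarith [h7]
  rcases mul_eq_zero.mp h8 with h9 | h9
  · rcases mul_eq_zero.mp h9 with h10 | h10
    · exact Or.inl h10
    · exact Or.inr (Or.inl (by linarith))
  · exact Or.inr (Or.inr (by linarith))

lemma sigmaP_evals_sum :
    (sigmaP_herm.eigenvalues (0,0) + sigmaP_herm.eigenvalues (0,1))
      + (sigmaP_herm.eigenvalues (1,0) + sigmaP_herm.eigenvalues (1,1)) = 1 := by
  have h := trace_eq_sum_evals sigmaP_herm
  rw [sigmaP_trace, Fintype.sum_prod_type] at h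
  simp only [Fin.sum_univ_two] at h
  exact_mod_cast h.symm

lemma sigmaP_evals_sq_sum :
    (sigmaP_herm.eigenvalues (0,0)^2 + sigmaP_herm.eigenvalues (0,1)^2)
      + (sigmaP_herm.eigenvalues (1,0)^2 + sigmaP_herm.eigenvalues (1,1)^2) = 3/8 := by
  have h := trace_sq_eq_sum_evals sigmaP_herm
  rw [sigmaP_sq_trace, Fintype.sum_prod_type] at h
  simp only [Fin.sum_univ_two] at h
  exact_mod_cast h.symm

lemma quad_classify (a b c d : ℝ)
    (ha : a = 0 ∨ a = 1/4 ∨ a = 1/2) (hb : b = 0 ∨ b = 1/4 ∨ b = 1/2)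
    (hc : c = 0 ∨ c = 1/4 ∨ c = 1/2) (hd : d = 0 ∨ d = 1/4 ∨ d = 1/2)
    (hsum : (a + b) + (c + d) = 1) (hsq : (a^2 + b^2) + (c^2 + d^2) = 3/8) :
    (((if a = (1/2:ℝ) then (1:ℕ) else 0) + (if b = (1/2:ℝ) then 1 else 0))
      + ((if c = (1/2:ℝ) then 1 else 0) + (if d = (1/2:ℝ) then 1 else 0)) = 1)
    ∧ (((if a = (1/4:ℝ) then (1:ℕ) else 0) + (if b = (1/4:ℝ) then 1 else 0))
      + ((if c = (1/4:ℝ) then 1 else 0) + (if d = (1/4:ℝ) then 1 else 0)) = 2)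
    ∧ (a = 0 ∨ b = 0 ∨ c = 0 ∨ d = 0)
    ∧ (a = 1/4 ∨ b = 1/4 ∨ c = 1/4 ∨ d = 1/4)
    ∧ (a = 1/2 ∨ b = 1/2 ∨ c = 1/2 ∨ d = 1/2) := by
  rcases ha with rfl | rfl | rfl <;> rcases hb with rfl | rfl | rfl <;>
    rcases hc with rfl | rfl | rfl <;> rcases hd with rfl | rfl | rfl <;>
    revert hsum hsq <;> norm_num


lemma sigmaP_counts :
    (((if sigmaP_herm.eigenvalues (0,0) = (1/2:ℝ) then (1:ℕ) else 0)
        + (if sigmaP_herm.eigenvalues (0,1) = (1/2:ℝ) then 1 else 0))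
      + ((if sigmaP_herm.eigenvalues (1,0) = (1/2:ℝ) then 1 else 0)
        + (if sigmaP_herm.eigenvalues (1,1) = (1/2:ℝ) then 1 else 0)) = 1)
    ∧ (((if sigmaP_herm.eigenvalues (0,0) = (1/4:ℝ) then (1:ℕ) else 0)
        + (if sigmaP_herm.eigenvalues (0,1) = (1/4:ℝ) then 1 else 0))
      + ((if sigmaP_herm.eigenvalues (1,0) = (1/4:ℝ) then 1 else 0)
        + (if sigmaP_herm.eigenvalues (1,1) = (1/4:ℝ) then 1 else 0)) = 2)
    ∧ (sigmaP_herm.eigenvalues (0,0) = 0 ∨ sigmaP_herm.eigenvalues (0,1) = 0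
        ∨ sigmaP_herm.eigenvalues (1,0) = 0 ∨ sigmaP_herm.eigenvalues (1,1) = 0)
    ∧ (sigmaP_herm.eigenvalues (0,0) = 1/4 ∨ sigmaP_herm.eigenvalues (0,1) = 1/4
        ∨ sigmaP_herm.eigenvalues (1,0) = 1/4 ∨ sigmaP_herm.eigenvalues (1,1) = 1/4)
    ∧ (sigmaP_herm.eigenvalues (0,0) = 1/2 ∨ sigmaP_herm.eigenvalues (0,1) = 1/2
        ∨ sigmaP_herm.eigenvalues (1,0) = 1/2 ∨ sigmaP_herm.eigenvalues (1,1) = 1/2) :=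
  quad_classify _ _ _ _ (sigmaP_evals_mem _) (sigmaP_evals_mem _) (sigmaP_evals_mem _)
    (sigmaP_evals_mem _) sigmaP_evals_sum sigmaP_evals_sq_sum

lemma filter_half_card :
    (univ.filter (fun k => sigmaP_herm.eigenvalues k = (1/2:ℝ))).card = 1 := by
  rw [Finset.card_filter, Fintype.sum_prod_type]
  simp only [Fin.sum_univ_two]
  exact sigmaP_counts.1

lemma filter_quarter_card :
    (univ.filter (fun k => sigmaP_herm.eigenvalues k = (1/4:ℝ))).card = 2 := by
  rw [Finset.card_filter, Fintype.sum_prod_type]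
  simp only [Fin.sum_univ_two]
  exact sigmaP_counts.2.1

lemma dimEig_half : dimEig sigmaP (1/2) = 1 := by
  unfold dimEig
  rw [dif_pos sigmaP_herm]
  exact filter_half_card

lemma dimEig_quarter : dimEig sigmaP (1/4) = 2 := by
  unfold dimEig
  rw [dif_pos sigmaP_herm]
  exact filter_quarter_card

lemma evalsR_sigmaP : evalsR sigmaP = sigmaP_herm.eigenvalues := by
  unfold evalsR
  rw [dif_pos sigmaP_herm]

lemma image_evals : Finset.image (evalsR sigmaP) univ = ({0, 1/4, 1/2} : Finset ℝ) := by
  rw [evalsR_sigmaP]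
  apply Finset.Subset.antisymm
  · intro x hx
    rw [Finset.mem_image] at hx
    obtain ⟨k, -, rfl⟩ := hx
    rcases sigmaP_evals_mem k with h | h | h <;> simp [h]
  · intro x hx
    simp only [Finset.mem_insert, Finset.mem_singleton] at hx
    rw [Finset.mem_image]
    rcases hx with rfl | rfl | rfl
    · rcases sigmaP_counts.2.2.1 with h | h | h | h
      exacts [⟨(0,0), Finset.mem_univ _, h⟩, ⟨(0,1), Finset.mem_univ _, h⟩,
        ⟨(1,0), Finset.mem_univ _, h⟩, ⟨(1,1), Finset.mem_univ _, h⟩]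
    · rcases sigmaP_counts.2.2.2.1 with h | h | h | h
      exacts [⟨(0,0), Finset.mem_univ _, h⟩, ⟨(0,1), Finset.mem_univ _, h⟩,
        ⟨(1,0), Finset.mem_univ _, h⟩, ⟨(1,1), Finset.mem_univ _, h⟩]
    · rcases sigmaP_counts.2.2.2.2 with h | h | h | h
      exacts [⟨(0,0), Finset.mem_univ _, h⟩, ⟨(0,1), Finset.mem_univ _, h⟩,
        ⟨(1,0), Finset.mem_univ _, h⟩, ⟨(1,1), Finset.mem_univ _, h⟩]

lemma eigProj_half : eigProj sigmaP (1/2) = (8:ℂ) • (sigmaP * sigmaP) + (-2:ℂ) • sigmaP :=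
  eigProj_poly sigmaP_herm (1/2) 8 (-2) (by
    intro k
    rcases sigmaP_evals_mem k with h | h | h <;> rw [h] <;> push_cast <;> norm_num)

lemma eigProj_quarter : eigProj sigmaP (1/4) = (-16:ℂ) • (sigmaP * sigmaP) + (8:ℂ) • sigmaP :=
  eigProj_poly sigmaP_herm (1/4) (-16) 8 (by
    intro k
    rcases sigmaP_evals_mem k with h | h | h <;> rw [h] <;> push_cast <;> norm_num)

lemma ptraceB_trunc_half :
    ptraceB (trunc sigmaP (1/2)) = ((1/4 : ℝ) : ℂ) • (1 : Matrix (Fin 2) (Fin 2) ℂ) := by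
  rw [trunc, eigProj_half, sigmaP_sq, sigmaP_eq]
  ext a b
  fin_cases a <;> fin_cases b <;>
    simp [ptraceB, Fin.sum_univ_two, Bm, Bm2, Matrix.smul_apply, Matrix.add_apply,
      Matrix.one_apply, Prod.ext_iff] <;> norm_num

lemma ptraceA_trunc_half :
    ptraceA (trunc sigmaP (1/2)) = ((1/4 : ℝ) : ℂ) • (1 : Matrix (Fin 2) (Fin 2) ℂ) := by
  rw [trunc, eigProj_half, sigmaP_sq, sigmaP_eq]
  ext a b
  fin_cases a <;> fin_cases b <;>
    simp [ptraceA, Fin.sum_univ_two, Bm, Bm2, Matrix.smul_apply, Matrix.add_apply,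
      Matrix.one_apply, Prod.ext_iff] <;> norm_num

lemma ptraceB_trunc_quarter :
    ptraceB (trunc sigmaP (1/4)) = ((1/4 : ℝ) : ℂ) • (1 : Matrix (Fin 2) (Fin 2) ℂ) := by
  rw [trunc, eigProj_quarter, sigmaP_sq, sigmaP_eq]
  ext a b
  fin_cases a <;> fin_cases b <;>
    simp [ptraceB, Fin.sum_univ_two, Bm, Bm2, Matrix.smul_apply, Matrix.add_apply,
      Matrix.one_apply, Prod.ext_iff] <;> norm_num

lemma ptraceA_trunc_quarter :
    ptraceA (trunc sigmaP (1/4)) = ((1/4 : ℝ) : ℂ) • (1 : Matrix (Fin 2) (Fin 2) ℂ) := by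
  rw [trunc, eigProj_quarter, sigmaP_sq, sigmaP_eq]
  ext a b
  fin_cases a <;> fin_cases b <;>
    simp [ptraceA, Fin.sum_univ_two, Bm, Bm2, Matrix.smul_apply, Matrix.add_apply,
      Matrix.one_apply, Prod.ext_iff] <;> norm_num

lemma trunc_sigmaP_zero : trunc sigmaP 0 = 0 := by
  unfold trunc
  norm_num

lemma ptraceB_zero : ptraceB (0 : Matrix ((Fin 2) × (Fin 2)) ((Fin 2) × (Fin 2)) ℂ) = 0 := by
  ext a b
  simp [ptraceB]

lemma ptraceA_zero : ptraceA (0 : Matrix ((Fin 2) × (Fin 2)) ((Fin 2) × (Fin 2)) ℂ) = 0 := by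
  ext a b
  simp [ptraceA]

lemma evalsR_smul_one (c : ℝ) (i : Fin 2) :
    evalsR (((c : ℝ) : ℂ) • (1 : Matrix (Fin 2) (Fin 2) ℂ)) i = c := by
  have h : (((c : ℝ) : ℂ) • (1 : Matrix (Fin 2) (Fin 2) ℂ)).IsHermitian := by
    show Matrix.conjTranspose _ = _
    rw [Matrix.conjTranspose_smul, Matrix.conjTranspose_one, Complex.star_def,
      Complex.conj_ofReal]
  unfold evalsR
  rw [dif_pos h]
  exact eval_of_smul_one h rfl i

lemma evalsR_zero (i : Fin 2) : evalsR (0 : Matrix (Fin 2) (Fin 2) ℂ) i = 0 := by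
  have h0 : (0 : Matrix (Fin 2) (Fin 2) ℂ) = (((0:ℝ) : ℂ)) • 1 := by simp
  rw [h0]
  exact evalsR_smul_one 0 i


lemma nim_zero_zero : nim 0 0 = 0 := by
  unfold nim
  simp

lemma Mterm_eta_zero (T : ℝ) : Mterm 0 T 0 = 0 := by
  unfold Mterm
  rw [nim_zero_zero]
  simp

lemma nim_half_quarter : nim (1/2) (1/4) = 0 := by
  have hc : ⌈(1/2 : ℝ)⌉ = 1 := by
    rw [Int.ceil_eq_iff]
    norm_num
  have hf : ⌊(1/2 : ℝ)⌋ = 0 := by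
    rw [Int.floor_eq_iff]
    norm_num
  unfold nim
  rw [show (1/4 : ℝ)/(1/2) = 1/2 by norm_num, hc, hf]
  norm_num

lemma nim_quarter_quarter : nim (1/4) (1/4) = 1/4 := by
  unfold nim
  norm_num

lemma Mterm_quarter (T : ℝ) : Mterm (1/4) T (1/4) = 0 := by
  unfold Mterm
  rw [nim_quarter_quarter]
  simp

lemma Mterm_half : Mterm (1/2) (1/2) (1/4) = 1/4 := by
  unfold Mterm
  rw [nim_half_quarter]
  rw [show ((1/4 : ℝ))/(1/2) = 2⁻¹ by norm_num, Real.logb_inv,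
    Real.logb_self_eq_one (by norm_num)]
  norm_num

lemma MmeasA_sigmaP : MmeasA sigmaP = 1/2 := by
  unfold MmeasA
  rw [image_evals]
  rw [Finset.sum_insert (by norm_num), Finset.sum_insert (by norm_num), Finset.sum_singleton]
  rw [trunc_sigmaP_zero, ptraceB_zero, ptraceB_trunc_half, ptraceB_trunc_quarter,
    dimEig_half, dimEig_quarter]
  simp only [Fin.sum_univ_two, evalsR_zero, evalsR_smul_one, Nat.cast_one, Nat.cast_ofNat,
    mul_one]
  rw [Mterm_eta_zero, Mterm_half, Mterm_quarter]
  norm_num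

lemma MmeasB_sigmaP : MmeasB sigmaP = 1/2 := by
  unfold MmeasB
  rw [image_evals]
  rw [Finset.sum_insert (by norm_num), Finset.sum_insert (by norm_num), Finset.sum_singleton]
  rw [trunc_sigmaP_zero, ptraceA_zero, ptraceA_trunc_half, ptraceA_trunc_quarter,
    dimEig_half, dimEig_quarter]
  simp only [Fin.sum_univ_two, evalsR_zero, evalsR_smul_one, Nat.cast_one, Nat.cast_ofNat,
    mul_one]
  rw [Mterm_eta_zero, Mterm_half, Mterm_quarter]
  norm_num

/-- `M(σ') = M^A(σ') = M^B(σ') = 1/2 > 0`, so `M` detects σ' as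
nonclassically correlated. -/
theorem Mmeas_sigmaP_eq_half :
    MmeasA sigmaP = 1 / 2 ∧ MmeasB sigmaP = 1 / 2 ∧ Mmeas sigmaP = 1 / 2 ∧
    0 < Mmeas sigmaP := by
  refine ⟨MmeasA_sigmaP, MmeasB_sigmaP, ?_, ?_⟩ <;>
    rw [Mmeas, MmeasA_sigmaP, MmeasB_sigmaP] <;> norm_num

end
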